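/- Let k have characteristic 2, G = ⟨σ⟩ cyclic of order 4 acting on V = V_3 as above, Δ = σ−1, H = ⟨σ^2⟩, and A = k[N^G(x_1), N^G_H(x_2), x_3]. Then ker(Δ^2) = k[V]^H is generated as an A-module by {1, x_2, N^H(x_1), x_2·N^H(x_1)}, where N^H(x_1) = x_1·σ^2(x_1) = x_1^2 + x_1x_3, and this generating set is free. -/

import Mathlib

open MvPolynomial

/-- The action of the generator `σ` of `G = C₄` on `k[V₃] = k[x₁,x₂,x₃]`
(char 2): `σx₁ = x₁+x₂`, `σx₂ = x₂+x₃`, `σx₃ = x₃` (variables `X 0, X 1, X 2`). -/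
noncomputable def sigmaC4 (K : Type*) [CommSemiring K] :
    MvPolynomial (Fin 3) K →ₐ[K] MvPolynomial (Fin 3) K :=
  aeval ![X 0 + X 1, X 1 + X 2, X 2]

/-- `Δ = σ − 1` on `k[V₃]`. -/
noncomputable def deltaC4 (K : Type*) [CommRing K] (f : MvPolynomial (Fin 3) K) :
    MvPolynomial (Fin 3) K :=
  sigmaC4 K f - f

/-- auxiliary: an algebra endomorphism fixing a set fixes the adjoined algebra. -/
theorem fix_adjoin_aux {K R : Type*} [CommSemiring K] [CommSemiring R] [Algebra K R]
    (φ : R →ₐ[K] R) (s : Set R) (h : ∀ x ∈ s, φ x = x) :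
    ∀ a ∈ Algebra.adjoin K s, φ a = a := by
  intro a ha
  induction ha using Algebra.adjoin_induction with
  | mem x hx => exact h x hx
  | algebraMap r => exact φ.commutes r
  | add x y _ _ hx hy => rw [map_add, hx, hy]
  | mul x y _ _ hx hy => rw [map_mul, hx, hy]

/-- `x₂ ↦ x₂ + x₃` (other variables fixed). -/
noncomputable def thetaC4 (K : Type*) [CommSemiring K] :
    MvPolynomial (Fin 3) K →ₐ[K] MvPolynomial (Fin 3) K :=
  aeval ![X 0, X 1 + X 2, X 2]

/-- `x₁ ↦ x₁ + x₂` (other variables fixed). -/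
noncomputable def rhoC4 (K : Type*) [CommSemiring K] :
    MvPolynomial (Fin 3) K →ₐ[K] MvPolynomial (Fin 3) K :=
  aeval ![X 0 + X 1, X 1, X 2]

/-- For `char k = 2`, `G = C₄` acting on `V₃`, `H = ⟨σ²⟩` and
`A = k[N^G(x₁), N^G_H(x₂), x₃]`: `ker(Δ²) = k[V]^H` and it is freely generated
as an `A`-module by `{1, x₂, N^H(x₁), x₂·N^H(x₁)}`, where `N^H(x₁) = x₁·σ²(x₁)`. -/
theorem K2_free_over_A_C4
    {K : Type*} [Field K] [CharP K 2]
    (N₁ N₂ NH : MvPolynomial (Fin 3) K)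
    (hN₁ : N₁ = ∏ i ∈ Finset.range 4, (⇑(sigmaC4 K))^[i] (X 0))
    (hN₂ : N₂ = X 1 * sigmaC4 K (X 1))
    (hNH : NH = X 0 * (⇑(sigmaC4 K))^[2] (X 0))
    (F : Fin 4 → MvPolynomial (Fin 3) K)
    (hF : F = ![1, X 1, NH, X 1 * NH]) :
    -- `ker(Δ²) = k[V]^H`
    (∀ f : MvPolynomial (Fin 3) K,
        (deltaC4 K)^[2] f = 0 ↔ (⇑(sigmaC4 K))^[2] f = f) ∧
    -- the proposed generators lie in `ker(Δ²)`
    (∀ i : Fin 4, (deltaC4 K)^[2] (F i) = 0) ∧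
    -- they generate `ker(Δ²)` over `A`
    (∀ f : MvPolynomial (Fin 3) K, (deltaC4 K)^[2] f = 0 →
        f ∈ Submodule.span (Algebra.adjoin K {N₁, N₂, X 2}) (Set.range F)) ∧
    -- and they are `A`-linearly independent
    LinearIndependent (Algebra.adjoin K {N₁, N₂, X 2}) F := by
  have h2 : (2 : MvPolynomial (Fin 3) K) = 0 := by
    rw [← map_ofNat (C : K →+* MvPolynomial (Fin 3) K) 2,
      show (2:K) = 0 from by exact_mod_cast CharP.cast_eq_zero K 2, map_zero]
  set σ := sigmaC4 K with hσdef
  have hσ0 : σ (X 0) = X 0 + X 1 := by simp [hσdef, sigmaC4]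
  have hσ1 : σ (X 1) = X 1 + X 2 := by simp [hσdef, sigmaC4]
  have hσ2 : σ (X 2) = X 2 := by simp [hσdef, sigmaC4]
  have hit : ∀ f : MvPolynomial (Fin 3) K, (⇑σ)^[2] f = σ (σ f) := fun f => rfl
  have hs20 : σ (σ (X 0)) = X 0 + X 2 := by
    rw [hσ0, map_add, hσ0, hσ1]; linear_combination (X 1 : MvPolynomial (Fin 3) K) * h2
  have hs21 : σ (σ (X 1)) = X 1 := by
    rw [hσ1, map_add, hσ1, hσ2]; linear_combination (X 2 : MvPolynomial (Fin 3) K) * h2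
  have hs22 : σ (σ (X 2)) = X 2 := by rw [hσ2, hσ2]
  have hw : NH = X 0 ^ 2 + X 0 * X 2 := by rw [hNH, hit, hs20]; ring
  have hn2 : N₂ = X 1 ^ 2 + X 1 * X 2 := by rw [hN₂, hσ1]; ring
  have hσNH : σ NH = NH + N₂ := by
    rw [hw, hn2]
    simp only [map_add, map_mul, map_pow, hσ0, hσ2]
    linear_combination (X 0 * X 1 : MvPolynomial (Fin 3) K) * h2
  have hσN2 : σ N₂ = N₂ := by
    rw [hn2]
    simp only [map_add, map_mul, map_pow, hσ1, hσ2]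
    linear_combination (X 1 * X 2 + X 2 ^ 2 : MvPolynomial (Fin 3) K) * h2
  have hs2NH : σ (σ NH) = NH := by
    rw [hσNH, map_add, hσNH, hσN2]; linear_combination N₂ * h2
  have hn1 : N₁ = NH ^ 2 + NH * N₂ := by
    have e3 : (⇑σ)^[3] (X 0) = X 0 + X 1 + X 2 := by
      show σ (σ (σ (X 0))) = _
      rw [hs20, map_add, hσ0, hσ2]
    have e2 : (⇑σ)^[2] (X 0) = X 0 + X 2 := by rw [hit, hs20]
    have e1 : (⇑σ)^[1] (X 0) = X 0 + X 1 := by show σ (X 0) = _; exact hσ0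
    have e0 : (⇑σ)^[0] (X 0) = X 0 := rfl
    rw [hN₁, Finset.prod_range_succ, Finset.prod_range_succ, Finset.prod_range_succ,
      Finset.prod_range_one, e0, e1, e2, e3, hw, hn2]
    linear_combination (X 0 ^ 3 * X 1 + X 0 ^ 2 * X 1 * X 2 : MvPolynomial (Fin 3) K) * h2
  -- part 1
  have part1 : ∀ f : MvPolynomial (Fin 3) K,
      (deltaC4 K)^[2] f = 0 ↔ (⇑σ)^[2] f = f := by
    intro f
    have hΔ : (deltaC4 K)^[2] f = σ (σ f) + f := by
      show deltaC4 K (deltaC4 K f) = _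
      simp only [deltaC4, ← hσdef, map_sub]
      linear_combination (-(σ f)) * h2
    rw [hΔ, hit]
    constructor
    · intro h; linear_combination h - f * h2
    · intro h; linear_combination h + f * h2
  subst hF
  -- part 2
  have part2 : ∀ i : Fin 4, (deltaC4 K)^[2] (![1, X 1, NH, X 1 * NH] i) = 0 := by
    intro i
    rw [part1, hit]
    fin_cases i <;> simp [hs21, hs2NH]
  refine ⟨part1, part2, ?_, ?_⟩
  -- common facts
  · -- part 3 : spanning
    intro f hf
    have hf2 : σ (σ f) = f := by rw [← hit]; exact (part1 f).1 hf
    -- Step A : every polynomial is in span_S {1, X 0} where S = adjoin {X 1, X 2, NH}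
    set S := Algebra.adjoin K ({X 1, X 2, NH} : Set (MvPolynomial (Fin 3) K)) with hSdef
    set MS := Submodule.span S ({1, X 0} : Set (MvPolynomial (Fin 3) K)) with hMSdef
    have hsmulS : ∀ a ∈ S, ∀ m ∈ MS, a * m ∈ MS := by
      intro a ha m hm
      simpa [Subalgebra.smul_def, smul_eq_mul] using MS.smul_mem ⟨a, ha⟩ hm
    have h1MS : (1 : MvPolynomial (Fin 3) K) ∈ MS :=
      Submodule.subset_span (by simp)
    have hX0MS : (X 0 : MvPolynomial (Fin 3) K) ∈ MS :=
      Submodule.subset_span (by simp)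
    have hX1S : (X 1 : MvPolynomial (Fin 3) K) ∈ S := Algebra.subset_adjoin (by simp)
    have hX2S : (X 2 : MvPolynomial (Fin 3) K) ∈ S := Algebra.subset_adjoin (by simp)
    have hNHS : NH ∈ S := Algebra.subset_adjoin (by simp)
    have hspan : ∀ g : MvPolynomial (Fin 3) K, g ∈ MS := by
      intro g
      induction g using MvPolynomial.induction_on with
      | C a =>
        have : (C a : MvPolynomial (Fin 3) K) ∈ S := S.algebraMap_mem a
        simpa using hsmulS _ this 1 h1MS
      | add p q hp hq => exact MS.add_mem hp hq
      | mul_X p n hp =>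
        fin_cases n
        · -- multiplication by X 0
          show p * X 0 ∈ MS
          induction hp using Submodule.span_induction with
          | mem x hx =>
            have hx' : x = 1 ∨ x = X 0 := by simpa using hx
            rcases hx' with h | h <;> rw [h]
            · simpa using hX0MS
            · have hx2 : X 0 * X 0 = NH * 1 + (-(X 2)) * X 0 := by linear_combination -hw
              rw [hx2]
              exact MS.add_mem (hsmulS NH hNHS 1 h1MS)
                (hsmulS (-(X 2)) (S.neg_mem hX2S) _ hX0MS)
          | zero => simpa using MS.zero_mem
          | add x y _ _ hx hy => rw [add_mul]; exact MS.add_mem hx hy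
          | smul a x _ hx => rw [smul_mul_assoc]; exact MS.smul_mem a hx
        · show p * X 1 ∈ MS
          rw [mul_comm]; exact hsmulS _ hX1S p hp
        · show p * X 2 ∈ MS
          rw [mul_comm]; exact hsmulS _ hX2S p hp
    -- σ² fixes S elementwise
    have hfixS : ∀ s ∈ S, σ (σ s) = s := by
      intro s hs
      refine fix_adjoin_aux (σ.comp σ) _ ?_ s hs
      intro x hx
      have hx' : x = X 1 ∨ x = X 2 ∨ x = NH := by simpa using hx
      rcases hx' with h | h | h <;> rw [h]
      · exact hs21
      · exact hs22
      · exact hs2NH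
    -- invariant f lies in S
    have hfS : f ∈ S := by
      obtain ⟨p, q, hpq⟩ := Submodule.mem_span_pair.mp (hspan f)
      simp only [Subalgebra.smul_def, smul_eq_mul, mul_one] at hpq
      have hσσ : σ (σ f) = (p : MvPolynomial (Fin 3) K) + (q : MvPolynomial (Fin 3) K) * (X 0 + X 2) := by
        rw [← hpq, map_add, map_add, map_mul, map_mul,
          hfixS _ p.2, hfixS _ q.2, hs20]
      have hq0 : (q : MvPolynomial (Fin 3) K) * X 2 = 0 := by
        have := hσσ.symm.trans hf2
        linear_combination this - hpq
      have : (q : MvPolynomial (Fin 3) K) = 0 := by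
        rcases mul_eq_zero.mp hq0 with h | h
        · exact h
        · exact absurd h (MvPolynomial.X_ne_zero 2)
      rw [← hpq, this, zero_mul, add_zero]
      exact p.2
    -- Step B : S is contained in the span of the four generators over A
    set A := Algebra.adjoin K ({N₁, N₂, X 2} : Set (MvPolynomial (Fin 3) K)) with hAdef
    set M := Submodule.span A
      (Set.range ![1, X 1, NH, X 1 * NH]) with hMdef
    have hsmulM : ∀ a ∈ A, ∀ m ∈ M, a * m ∈ M := by
      intro a ha m hm
      simpa [Subalgebra.smul_def, smul_eq_mul] using M.smul_mem ⟨a, ha⟩ hm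
    have hAN1 : N₁ ∈ A := Algebra.subset_adjoin (by simp)
    have hAN2 : N₂ ∈ A := Algebra.subset_adjoin (by simp)
    have hAz : (X 2 : MvPolynomial (Fin 3) K) ∈ A := Algebra.subset_adjoin (by simp)
    have hM1 : (1 : MvPolynomial (Fin 3) K) ∈ M := Submodule.subset_span ⟨0, rfl⟩
    have hMx1 : (X 1 : MvPolynomial (Fin 3) K) ∈ M := Submodule.subset_span ⟨1, rfl⟩
    have hMNH : NH ∈ M := Submodule.subset_span ⟨2, rfl⟩
    have hMx1NH : X 1 * NH ∈ M := Submodule.subset_span ⟨3, rfl⟩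
    -- multiplication by the generators of S preserves M
    have key : ∀ x : MvPolynomial (Fin 3) K,
        (x * 1 ∈ M) → (x * X 1 ∈ M) → (x * NH ∈ M) → (x * (X 1 * NH) ∈ M) →
        ∀ m ∈ M, x * m ∈ M := by
      intro x k1 k2 k3 k4 m hm
      induction hm using Submodule.span_induction with
      | mem y hy =>
        obtain ⟨j, rfl⟩ := hy
        fin_cases j
        · exact k1
        · exact k2
        · exact k3
        · exact k4
      | zero => simpa using M.zero_mem
      | add y z _ _ hy hz => rw [mul_add]; exact M.add_mem hy hz
      | smul a y _ hy => rw [mul_smul_comm]; exact M.smul_mem a hy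
    have hmulS : ∀ s ∈ S, ∀ m ∈ M, s * m ∈ M := by
      intro s hs
      induction hs using Algebra.adjoin_induction with
      | mem x hx =>
        have hx' : x = X 1 ∨ x = X 2 ∨ x = NH := by simpa using hx
        have K1 : ∀ m ∈ M, X 1 * m ∈ M := by
          refine key _ ?_ ?_ ?_ ?_
          · simpa using hMx1
          · have e : X 1 * X 1 = N₂ * 1 + (-(X 2)) * X 1 := by linear_combination -hn2
            rw [e]
            exact M.add_mem (hsmulM N₂ hAN2 1 hM1) (hsmulM _ (A.neg_mem hAz) _ hMx1)
          · exact hMx1NH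
          · have e : X 1 * (X 1 * NH) = N₂ * NH + (-(X 2)) * (X 1 * NH) := by
              linear_combination (-NH) * hn2
            rw [e]
            exact M.add_mem (hsmulM N₂ hAN2 _ hMNH) (hsmulM _ (A.neg_mem hAz) _ hMx1NH)
        have K3 : ∀ m ∈ M, NH * m ∈ M := by
          refine key _ ?_ ?_ ?_ ?_
          · simpa using hMNH
          · rw [mul_comm]; exact hMx1NH
          · have e : NH * NH = N₁ * 1 + (-N₂) * NH := by linear_combination -hn1
            rw [e]
            exact M.add_mem (hsmulM N₁ hAN1 1 hM1) (hsmulM _ (A.neg_mem hAN2) _ hMNH)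
          · have e : NH * (X 1 * NH) = N₁ * X 1 + (-N₂) * (X 1 * NH) := by
              linear_combination (-(X 1)) * hn1
            rw [e]
            exact M.add_mem (hsmulM N₁ hAN1 _ hMx1) (hsmulM _ (A.neg_mem hAN2) _ hMx1NH)
        intro m hm
        rcases hx' with h | h | h <;> rw [h]
        · exact K1 m hm
        · exact hsmulM _ hAz m hm
        · exact K3 m hm
      | algebraMap r =>
        intro m hm; exact hsmulM _ (A.algebraMap_mem r) m hm
      | add x y _ _ hx hy =>
        intro m hm; rw [add_mul]; exact M.add_mem (hx m hm) (hy m hm)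
      | mul x y _ _ hx hy =>
        intro m hm; rw [mul_assoc]; exact hx _ (hy m hm)
    have := hmulS f hfS 1 hM1
    rwa [mul_one] at this
  · -- part 4 : linear independence
    rw [Fintype.linearIndependent_iff]
    set A := Algebra.adjoin K ({N₁, N₂, X 2} : Set (MvPolynomial (Fin 3) K)) with hAdef
    set θ := thetaC4 K with hθdef
    set ρ := rhoC4 K with hρdef
    have hθ0 : θ (X 0) = X 0 := by simp [hθdef, thetaC4]
    have hθ1 : θ (X 1) = X 1 + X 2 := by simp [hθdef, thetaC4]
    have hθ2 : θ (X 2) = X 2 := by simp [hθdef, thetaC4]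
    have hρ0 : ρ (X 0) = X 0 + X 1 := by simp [hρdef, rhoC4]
    have hρ1 : ρ (X 1) = X 1 := by simp [hρdef, rhoC4]
    have hρ2 : ρ (X 2) = X 2 := by simp [hρdef, rhoC4]
    have hθNH : θ NH = NH := by
      rw [hw]; simp only [map_add, map_mul, map_pow, hθ0, hθ2]
    have hθN2 : θ N₂ = N₂ := by
      rw [hn2]; simp only [map_add, map_mul, map_pow, hθ1, hθ2]
      linear_combination (X 1 * X 2 + X 2 ^ 2 : MvPolynomial (Fin 3) K) * h2
    have hθN1 : θ N₁ = N₁ := by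
      rw [hn1]; simp only [map_add, map_mul, map_pow, hθNH, hθN2]
    have hρNH : ρ NH = NH + N₂ := by
      rw [hw, hn2]; simp only [map_add, map_mul, map_pow, hρ0, hρ2]
      linear_combination (X 0 * X 1 : MvPolynomial (Fin 3) K) * h2
    have hρN2 : ρ N₂ = N₂ := by
      rw [hn2]; simp only [map_add, map_mul, map_pow, hρ1, hρ2]
    have hρN1 : ρ N₁ = N₁ := by
      rw [hn1]; simp only [map_add, map_mul, map_pow, hρNH, hρN2]
      linear_combination (NH * N₂ + N₂ ^ 2) * h2
    have hθA : ∀ a ∈ A, θ a = a := by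
      refine fix_adjoin_aux θ _ ?_
      intro x hx
      have hx' : x = N₁ ∨ x = N₂ ∨ x = X 2 := by simpa using hx
      rcases hx' with h | h | h <;> rw [h]
      · exact hθN1
      · exact hθN2
      · exact hθ2
    have hρA : ∀ a ∈ A, ρ a = a := by
      refine fix_adjoin_aux ρ _ ?_
      intro x hx
      have hx' : x = N₁ ∨ x = N₂ ∨ x = X 2 := by simpa using hx
      rcases hx' with h | h | h <;> rw [h]
      · exact hρN1
      · exact hρN2
      · exact hρ2
    have hX2ne : (X 2 : MvPolynomial (Fin 3) K) ≠ 0 := MvPolynomial.X_ne_zero 2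
    have hN2ne : N₂ ≠ 0 := by
      intro h
      have h' := congrArg (aeval (![0, 1, 0] : Fin 3 → K)) (hn2 ▸ h)
      simp at h'
    intro g hg
    simp only [Fin.sum_univ_four, Matrix.cons_val_zero, Matrix.cons_val_one,
      Matrix.head_cons, Matrix.cons_val_two, Matrix.tail_cons, Matrix.cons_val_three,
      Subalgebra.smul_def, smul_eq_mul, mul_one] at hg
    -- hg : ↑(g 0) + ↑(g 1) * X 1 + ↑(g 2) * NH + ↑(g 3) * (X 1 * NH) = 0
    have hθg := congrArg θ hg
    simp only [map_add, map_mul, map_zero, hθ1, hθNH,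
      hθA _ (g 0).2, hθA _ (g 1).2, hθA _ (g 2).2, hθA _ (g 3).2] at hθg
    have e1 : ((g 1 : MvPolynomial (Fin 3) K) + (g 3 : MvPolynomial (Fin 3) K) * NH) * X 2 = 0 := by
      linear_combination hθg - hg
    have e1' : (g 1 : MvPolynomial (Fin 3) K) + (g 3 : MvPolynomial (Fin 3) K) * NH = 0 := by
      rcases mul_eq_zero.mp e1 with h | h
      · exact h
      · exact absurd h hX2ne
    have hρe := congrArg ρ e1'
    simp only [map_add, map_mul, map_zero, hρNH, hρA _ (g 1).2, hρA _ (g 3).2] at hρe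
    have e3 : (g 3 : MvPolynomial (Fin 3) K) * N₂ = 0 := by linear_combination hρe - e1'
    have hg3 : (g 3 : MvPolynomial (Fin 3) K) = 0 := by
      rcases mul_eq_zero.mp e3 with h | h
      · exact h
      · exact absurd h hN2ne
    have hg1 : (g 1 : MvPolynomial (Fin 3) K) = 0 := by
      linear_combination e1' - NH * hg3
    have hg02 : (g 0 : MvPolynomial (Fin 3) K) + (g 2 : MvPolynomial (Fin 3) K) * NH = 0 := by
      linear_combination hg - X 1 * hg1 - (X 1 * NH) * hg3
    have hρe2 := congrArg ρ hg02
    simp only [map_add, map_mul, map_zero, hρNH, hρA _ (g 0).2, hρA _ (g 2).2] at hρe2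
    have e4 : (g 2 : MvPolynomial (Fin 3) K) * N₂ = 0 := by linear_combination hρe2 - hg02
    have hg2 : (g 2 : MvPolynomial (Fin 3) K) = 0 := by
      rcases mul_eq_zero.mp e4 with h | h
      · exact h
      · exact absurd h hN2ne
    have hg0 : (g 0 : MvPolynomial (Fin 3) K) = 0 := by
      linear_combination hg02 - NH * hg2
    intro i
    fin_cases i
    · exact Subtype.ext hg0
    · exact Subtype.ext hg1
    · exact Subtype.ext hg2
    · exact Subtype.ext hg3
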